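/- Let F₂ be the free group on x and y and let k ≥ 2 be even. Define βₛ = x^{s-1}(xy³)x^{s-1} for 1 ≤ s ≤ k, β_{k+1} = y⁻¹ x^{k-1}(xy³)x^{k-1} x, and β_{k+t} = (y⁻¹x⁻¹)^{t-1} y⁻¹ x^{k} y³ x^{k} (xy)^{t-1} for t ≥ 2. Then for any n ≥ k the elements β₁, ..., βₙ form a free basis of a free subgroup of F₂ of rank n. -/

import Mathlib

/-!
Statement 16: for even `k ≥ 2` define `βₛ = x^{s-1}(xy³)x^{s-1}` for `1 ≤ s ≤ k`,
`β_{k+1} = y⁻¹ x^{k-1}(xy³)x^{k-1} x`, and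
`β_{k+t} = (y⁻¹x⁻¹)^{t-1} y⁻¹ x^k y³ x^k (xy)^{t-1}` for `t ≥ 2`.
Then for any `n ≥ k` the elements `β₁, …, βₙ` form a free basis of a free subgroup of
`F₂` of rank `n`.  Expressed via injectivity of the lift `FreeGroup (Fin n) →* F₂`,
index `i ↦ s = i + 1`.
-/

namespace Stmt16

abbrev F2 := FreeGroup (Fin 2)

def x : F2 := FreeGroup.of 0
def y : F2 := FreeGroup.of 1

def β (k s : ℕ) : F2 :=
  if s ≤ k then x ^ (s - 1) * (x * y ^ 3) * x ^ (s - 1)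
  else if s = k + 1 then y⁻¹ * x ^ (k - 1) * (x * y ^ 3) * x ^ (k - 1) * x
  else (y⁻¹ * x⁻¹) ^ (s - k - 1) * y⁻¹ * x ^ k * y ^ 3 * x ^ k * (x * y) ^ (s - k - 1)

open List FreeGroup

/-! ### Generalities on reduced words in `F₂` -/

abbrev L2 := Fin 2 × Bool

/-- Two letters that do not cancel. -/
def NC (p q : L2) : Prop := ¬ (p.1 = q.1 ∧ p.2 = !q.2)

instance (p q : L2) : Decidable (NC p q) := by unfold NC; infer_instance

/-- A word is reduced. -/
def Rw (l : List L2) : Prop := List.IsChain NC l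

lemma Rw_nil : Rw [] := List.IsChain.nil

lemma Rw_reduce (l : List L2) : Rw (reduce l) := by
  induction l with
  | nil => simp [Rw, FreeGroup.reduce]
  | cons c l ih =>
    rw [reduce.cons]
    rcases h : reduce l with _ | ⟨d, t⟩
    · simp [Rw]
    · rw [h] at ih
      by_cases hc : c.1 = d.1 ∧ c.2 = !d.2
      · simpa [hc, Rw] using ih.tail
      · simp only [if_neg hc]
        exact List.isChain_cons_cons.2 ⟨hc, ih⟩

lemma Rw.tail {c : L2} {l : List L2} (h : Rw (c :: l)) : Rw l := List.IsChain.tail h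

lemma reduce_eq_self_of_Rw (l : List L2) (h : Rw l) : reduce l = l := by
  induction l with
  | nil => rfl
  | cons c l ih =>
    rw [reduce.cons, ih h.tail]
    rcases hl : l with _ | ⟨d, t⟩
    · rfl
    · have hnc : NC c d := by
        rw [hl] at h; exact (List.isChain_cons_cons.1 h).1
      simp only [if_neg hnc]

/-- Bounded cancellation: the reduced form of `p ++ q` keeps an initial segment of `p`. -/
lemma reduce_append_decomp (p q : List L2) (hp : Rw p) (hq : Rw q) :
    ∃ p₁ p₂ q₂, p = p₁ ++ p₂ ∧ q = invRev p₂ ++ q₂ ∧ reduce (p ++ q) = p₁ ++ q₂ := by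
  induction p with
  | nil => exact ⟨[], [], q, rfl, by simp [invRev], by simpa using reduce_eq_self_of_Rw q hq⟩
  | cons c p ih =>
    obtain ⟨p₁, p₂, q₂, h1, h2, h3⟩ := ih hp.tail
    have key : reduce ((c :: p) ++ q) =
        List.casesOn (p₁ ++ q₂) [c]
          (fun hd tl => if c.1 = hd.1 ∧ c.2 = !hd.2 then tl else c :: hd :: tl) := by
      rw [List.cons_append, reduce.cons, h3]
    rcases hp₁ : p₁ with _ | ⟨e, p₁'⟩
    · subst hp₁
      rcases hq₂ : q₂ with _ | ⟨d, r⟩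
      · subst hq₂
        refine ⟨[c], p, [], by simp, ?_, ?_⟩
        · have hp2 : p₂ = p := by simpa using h1.symm
          simp [h2, hp2]
        · simpa using key
      · subst hq₂
        by_cases hc : c.1 = d.1 ∧ c.2 = !d.2
        · refine ⟨[], c :: p, r, rfl, ?_, ?_⟩
          · have hd : d = (c.1, !c.2) := by
              obtain ⟨hc1, hc2⟩ := hc
              have h5 : d.2 = !c.2 := by rw [hc2, Bool.not_not]
              rw [hc1, ← h5]
            have h6 : invRev (c :: p) = invRev p ++ [(c.1, !c.2)] := by simp [invRev]
            have hp2 : p₂ = p := by simpa using h1.symm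
            rw [h6, h2, hp2, hd]
            simp
          · simpa [hc] using key
        · refine ⟨[c], p₂, d :: r, by simpa using h1, h2, ?_⟩
          simpa [hc] using key
    · have hnc : NC c e := by
        have h7 := hp
        rw [h1, hp₁] at h7
        exact (List.isChain_cons_cons.1 h7).1
      refine ⟨c :: p₁, p₂, q₂, by rw [List.cons_append, ← h1], h2, ?_⟩
      rw [hp₁] at key ⊢
      simpa [if_neg hnc] using key

lemma Rw_toWord (g : F2) : Rw g.toWord := by
  have := Rw_reduce g.toWord
  rwa [reduce_toWord] at this

/-- The key ping-pong estimate: multiplying by `g` on the left of a word not starting with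
`v` produces a word starting with `u`. -/
lemma prefix_mul (g w : F2) (u v : List L2)
    (hu : u <+: g.toWord) (hv : v <+: g⁻¹.toWord)
    (hlen : u.length + v.length ≤ g.toWord.length + 1)
    (hw : ¬ v <+: w.toWord) : u <+: (g * w).toWord := by
  set p := g.toWord with hp
  set q := w.toWord with hq
  have hgw : g * w = FreeGroup.mk (p ++ q) := by
    rw [← FreeGroup.mul_mk, hp, hq, FreeGroup.mk_toWord, FreeGroup.mk_toWord]
  rw [hgw, FreeGroup.toWord_mk]
  obtain ⟨p₁, p₂, q₂, h1, h2, h3⟩ := reduce_append_decomp p q (Rw_toWord g) (Rw_toWord w)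
  rw [h3]
  by_cases hc : v.length ≤ p₂.length
  · exfalso
    apply hw
    have hvp : v <+: invRev p := by rwa [FreeGroup.toWord_inv] at hv
    have hsplit : invRev p = invRev p₂ ++ invRev p₁ := by rw [h1]; simp [invRev]
    have hvp₂ : v <+: invRev p₂ := by
      have h4 : v = (invRev p₂ ++ invRev p₁).take v.length := by
        rw [← hsplit]
        exact List.prefix_iff_eq_take.1 hvp
      have h5 : (invRev p₂ ++ invRev p₁).take v.length = (invRev p₂).take v.length := by
        apply List.take_append_of_le_length
        rwa [FreeGroup.invRev_length]
      rw [h4, h5]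
      exact List.take_prefix _ _
    calc v <+: invRev p₂ := hvp₂
      _ <+: q := by rw [h2]; exact List.prefix_append _ _
  · push_neg at hc
    have hup₁ : u <+: p₁ := by
      have hlp : p₁ <+: p := by rw [h1]; exact List.prefix_append _ _
      rcases List.prefix_or_prefix_of_prefix hu hlp with h | h
      · exact h
      · have hlen2 : u.length ≤ p₁.length := by
          have hplen : p.length = p₁.length + p₂.length := by rw [h1]; simp
          have := hu.length_le
          omega
        have heq : p₁ = u := h.eq_of_length (le_antisymm h.length_le hlen2)
        rw [heq]
    exact hup₁.trans (List.prefix_append _ _)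

/-! ### The concrete words -/

def aa : L2 := (0, true)
def ai : L2 := (0, false)
def bb : L2 := (1, true)
def bi : L2 := (1, false)

def J : ℕ → List L2
  | 0 => []
  | t + 1 => bi :: ai :: J t

def AB : ℕ → List L2
  | 0 => []
  | t + 1 => aa :: bb :: AB t

lemma x_eq : x = FreeGroup.mk [aa] := rfl
lemma y_eq : y = FreeGroup.mk [bb] := rfl
lemma xinv_eq : x⁻¹ = FreeGroup.mk [ai] := by rw [x_eq, FreeGroup.inv_mk]; rfl
lemma yinv_eq : y⁻¹ = FreeGroup.mk [bi] := by rw [y_eq, FreeGroup.inv_mk]; rfl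

lemma x_pow (m : ℕ) : x ^ m = FreeGroup.mk (replicate m aa) := by
  induction m with
  | zero => rfl
  | succ m ih => rw [pow_succ, ih, x_eq, FreeGroup.mul_mk]; congr 1; rw [List.replicate_succ' (n := m) (a := aa)]

lemma y_pow (m : ℕ) : y ^ m = FreeGroup.mk (replicate m bb) := by
  induction m with
  | zero => rfl
  | succ m ih => rw [pow_succ, ih, y_eq, FreeGroup.mul_mk]; congr 1; rw [List.replicate_succ' (n := m) (a := bb)]

lemma c_pow (t : ℕ) : (y⁻¹ * x⁻¹) ^ t = FreeGroup.mk (J t) := by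
  induction t with
  | zero => rfl
  | succ t ih => rw [pow_succ', ih, yinv_eq, xinv_eq, FreeGroup.mul_mk, FreeGroup.mul_mk]; rfl

lemma d_pow (t : ℕ) : (x * y) ^ t = FreeGroup.mk (AB t) := by
  induction t with
  | zero => rfl
  | succ t ih => rw [pow_succ', ih, x_eq, y_eq, FreeGroup.mul_mk, FreeGroup.mul_mk]; rfl

def WA (s : ℕ) : List L2 := replicate s aa ++ replicate 3 bb ++ replicate (s - 1) aa
def WB (k : ℕ) : List L2 := bi :: (replicate k aa ++ replicate 3 bb ++ replicate k aa)
def WC (k t : ℕ) : List L2 :=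
  J t ++ bi :: (replicate k aa ++ replicate 3 bb ++ replicate k aa ++ AB t)

lemma β_case1 {k s : ℕ} (hs1 : 1 ≤ s) (hs : s ≤ k) : β k s = FreeGroup.mk (WA s) := by
  rw [β, if_pos hs, x_pow, y_pow, x_eq]
  simp only [FreeGroup.mul_mk]
  congr 1
  rw [WA]
  obtain ⟨s', rfl⟩ : ∃ s', s = s' + 1 := ⟨s - 1, by omega⟩
  simp only [Nat.add_sub_cancel]
  rw [List.replicate_succ' (n := s') (a := aa)]
  simp [List.append_assoc]

lemma β_case2 {k : ℕ} (hk : 1 ≤ k) : β k (k + 1) = FreeGroup.mk (WB k) := by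
  rw [β, if_neg (by omega), if_pos rfl, x_pow, y_pow, x_eq, yinv_eq]
  simp only [FreeGroup.mul_mk]
  congr 1
  rw [WB]
  obtain ⟨k', rfl⟩ : ∃ k', k = k' + 1 := ⟨k - 1, by omega⟩
  simp only [Nat.add_sub_cancel]
  rw [List.replicate_succ' (n := k') (a := aa)]
  simp [List.replicate_succ]

lemma β_case3 {k s : ℕ} (hs : k + 2 ≤ s) : β k s = FreeGroup.mk (WC k (s - k - 1)) := by
  rw [β, if_neg (by omega), if_neg (by omega), x_pow, y_pow, c_pow, d_pow, yinv_eq]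
  simp only [FreeGroup.mul_mk]
  congr 1
  rw [WC]
  simp [List.append_assoc]

lemma mem_head?_append {l₁ l₂ : List L2} {d : L2} (h : d ∈ (l₁ ++ l₂).head?) :
    d ∈ l₁.head? ∨ d ∈ l₂.head? := by
  cases l₁ <;> simp_all

lemma mem_head?_rep {n : ℕ} {c d : L2} (h : d ∈ (List.replicate n c).head?) : d = c := by
  cases n with
  | zero => simp_all
  | succ n =>
    rw [List.replicate_succ, List.head?_cons, Option.mem_def, Option.some_inj] at h
    exact h.symm

lemma Rw_rep_append {l : List L2} (n : ℕ) (c : L2) (hl : Rw l)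
    (h : ∀ d ∈ l.head?, NC c d) (hcc : NC c c) : Rw (List.replicate n c ++ l) := by
  induction n with
  | zero => simpa using hl
  | succ n ih =>
    rw [List.replicate_succ, List.cons_append]
    refine List.isChain_cons.2 ⟨?_, ih⟩
    intro d hd
    cases n with
    | zero => exact h d (by simpa using hd)
    | succ n =>
      rw [List.replicate_succ, List.cons_append, List.head?_cons] at hd
      cases hd
      exact hcc

lemma Rw_rep (n : ℕ) (c : L2) (hcc : NC c c) : Rw (List.replicate n c) := by
  have := Rw_rep_append n c Rw_nil (by simp) hcc
  simpa using this

lemma Rw_J_append {l : List L2} (t : ℕ) (hl : Rw l)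
    (h : ∀ d ∈ l.head?, NC ai d) : Rw (J t ++ l) := by
  induction t with
  | zero => simpa [J] using hl
  | succ t ih =>
    rw [J, List.cons_append, List.cons_append]
    refine List.isChain_cons_cons.2 ⟨by decide, ?_⟩
    refine List.isChain_cons.2 ⟨?_, ih⟩
    intro d hd
    cases t with
    | zero =>
      rw [show J 0 = [] from rfl, List.nil_append] at hd
      exact h d hd
    | succ t =>
      rw [J, List.cons_append, List.head?_cons] at hd
      cases hd
      decide

lemma Rw_AB (t : ℕ) : Rw (AB t) := by
  induction t with
  | zero => exact Rw_nil
  | succ t ih =>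
    rw [AB]
    refine List.isChain_cons_cons.2 ⟨by decide, List.isChain_cons.2 ⟨?_, ih⟩⟩
    intro d hd
    cases t with
    | zero => simp [AB] at hd
    | succ t => rw [AB, List.head?_cons] at hd; cases hd; decide

lemma head?_AB (t : ℕ) : ∀ d ∈ (AB t).head?, d = aa := by
  cases t with
  | zero => simp [AB]
  | succ t => simp [AB]

lemma Rw_middle (k₁ k₂ : ℕ) (tail : List L2) (htail : Rw tail)
    (hh : ∀ d ∈ tail.head?, d = aa) :
    Rw (replicate k₁ aa ++ replicate 3 bb ++ replicate k₂ aa ++ tail) := by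
  rw [List.append_assoc, List.append_assoc]
  apply Rw_rep_append _ _ _ _ (by decide)
  · apply Rw_rep_append _ _ _ _ (by decide)
    · apply Rw_rep_append _ _ htail _ (by decide)
      intro d hd
      rw [hh d hd]; decide
    · intro d hd
      rcases mem_head?_append hd with h | h
      · rw [mem_head?_rep h]; decide
      · rw [hh d h]; decide
  · intro d hd
    rcases mem_head?_append hd with h | h
    · rw [mem_head?_rep h]; decide
    · rcases mem_head?_append h with h | h
      · rw [mem_head?_rep h]; decide
      · rw [hh d h]; decide

lemma head?_mid (k : ℕ) (hk : 1 ≤ k) (tail : List L2) :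
    ∀ d ∈ (replicate k aa ++ replicate 3 bb ++ replicate k aa ++ tail).head?, d = aa := by
  obtain ⟨k', rfl⟩ : ∃ k', k = k' + 1 := ⟨k - 1, by omega⟩
  intro d hd
  rw [List.replicate_succ, List.cons_append, List.cons_append, List.cons_append,
    List.head?_cons, Option.mem_def, Option.some_inj] at hd
  exact hd.symm

lemma Rw_WA (s : ℕ) : Rw (WA s) := by
  have h := Rw_middle s (s - 1) [] Rw_nil (by simp)
  rw [List.append_nil] at h
  exact h

lemma Rw_WB (k : ℕ) (hk : 1 ≤ k) : Rw (WB k) := by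
  rw [WB]
  refine List.isChain_cons.2 ⟨?_, ?_⟩
  · have h := head?_mid k hk []
    intro d hd
    rw [h d (by simpa using hd)]
    decide
  · have h := Rw_middle k k [] Rw_nil (by simp)
    rw [List.append_nil] at h
    exact h

lemma Rw_WC (k t : ℕ) (hk : 1 ≤ k) : Rw (WC k t) := by
  rw [WC]
  apply Rw_J_append
  · refine List.isChain_cons.2 ⟨?_, ?_⟩
    · intro d hd
      rw [head?_mid k hk (AB t) d hd]
      decide
    · exact Rw_middle k k (AB t) (Rw_AB t) (head?_AB t)
  · intro d hd
    rw [List.head?_cons] at hd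
    cases hd
    decide


lemma toWord_case1 {k s : ℕ} (hs1 : 1 ≤ s) (hs : s ≤ k) : (β k s).toWord = WA s := by
  rw [β_case1 hs1 hs, FreeGroup.toWord_mk, reduce_eq_self_of_Rw _ (Rw_WA s)]

lemma toWord_case2 {k : ℕ} (hk : 1 ≤ k) : (β k (k + 1)).toWord = WB k := by
  rw [β_case2 hk, FreeGroup.toWord_mk, reduce_eq_self_of_Rw _ (Rw_WB k hk)]

lemma toWord_case3 {k s : ℕ} (hk : 1 ≤ k) (hs : k + 2 ≤ s) :
    (β k s).toWord = WC k (s - k - 1) := by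
  rw [β_case3 hs, FreeGroup.toWord_mk, reduce_eq_self_of_Rw _ (Rw_WC k _ hk)]

/-! ### invRev computations -/

lemma invRev_append' (l₁ l₂ : List L2) : invRev (l₁ ++ l₂) = invRev l₂ ++ invRev l₁ := by
  simp [invRev]

lemma invRev_cons' (c : L2) (l : List L2) : invRev (c :: l) = invRev l ++ [(c.1, !c.2)] := by
  simp [invRev]

lemma invRev_rep (n : ℕ) (c : L2) : invRev (replicate n c) = replicate n (c.1, !c.2) := by
  simp [invRev]

@[simp] lemma inv_aa : ((aa.1 : Fin 2), !aa.2) = ai := rfl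
@[simp] lemma inv_ai : ((ai.1 : Fin 2), !ai.2) = aa := rfl
@[simp] lemma inv_bb : ((bb.1 : Fin 2), !bb.2) = bi := rfl
@[simp] lemma inv_bi : ((bi.1 : Fin 2), !bi.2) = bb := rfl

lemma J_snoc (t : ℕ) : J t ++ [bi, ai] = J (t + 1) := by
  induction t with
  | zero => rfl
  | succ t ih => rw [J, List.cons_append, List.cons_append, ih]; rfl

lemma AB_snoc (t : ℕ) : AB t ++ [aa, bb] = AB (t + 1) := by
  induction t with
  | zero => rfl
  | succ t ih => rw [AB, List.cons_append, List.cons_append, ih]; rfl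

lemma invRev_J (t : ℕ) : invRev (J t) = AB t := by
  induction t with
  | zero => rfl
  | succ t ih =>
    rw [J, invRev_cons', invRev_cons', ih, inv_bi, inv_ai, List.append_assoc]
    exact AB_snoc t

lemma invRev_AB (t : ℕ) : invRev (AB t) = J t := by
  induction t with
  | zero => rfl
  | succ t ih =>
    rw [AB, invRev_cons', invRev_cons', ih, inv_aa, inv_bb, List.append_assoc]
    exact J_snoc t

lemma invRev_WA (s : ℕ) :
    invRev (WA s) = replicate (s - 1) ai ++ (replicate 3 bi ++ replicate s ai) := by
  rw [WA]
  simp only [invRev_append', invRev_rep, inv_aa, inv_bb]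

lemma invRev_WB (k : ℕ) :
    invRev (WB k) = replicate k ai ++ (replicate 3 bi ++ (replicate k ai ++ [bb])) := by
  rw [WB]
  simp only [invRev_cons', invRev_append', invRev_rep, inv_aa, inv_bb, inv_bi]
  simp [List.append_assoc]

lemma invRev_WC (k t : ℕ) :
    invRev (WC k t) =
      J t ++ (replicate k ai ++ (replicate 3 bi ++ (replicate k ai ++ (bb :: AB t)))) := by
  rw [WC]
  simp only [invRev_append', invRev_cons', invRev_rep, invRev_J, invRev_AB,
    inv_aa, inv_bb, inv_bi]
  simp [List.append_assoc]

/-! ### The ping-pong prefixes -/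

def U (k s : ℕ) : List L2 :=
  if s ≤ k then replicate s aa ++ [bb]
  else if s = k + 1 then [bi, aa]
  else J (s - k - 1) ++ [bi, aa]

def V (k s : ℕ) : List L2 :=
  if s ≤ k then replicate (s - 1) ai ++ [bi, bi]
  else if s = k + 1 then replicate k ai ++ [bi]
  else J (s - k - 1) ++ [ai]

lemma U_1 {k s : ℕ} (hs : s ≤ k) : U k s = replicate s aa ++ [bb] := by rw [U, if_pos hs]
lemma U_2 {k : ℕ} : U k (k + 1) = [bi, aa] := by rw [U, if_neg (by omega), if_pos rfl]
lemma U_3 {k s : ℕ} (hs : k + 2 ≤ s) : U k s = J (s - k - 1) ++ [bi, aa] := by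
  rw [U, if_neg (by omega), if_neg (by omega)]
lemma V_1 {k s : ℕ} (hs : s ≤ k) : V k s = replicate (s - 1) ai ++ [bi, bi] := by
  rw [V, if_pos hs]
lemma V_2 {k : ℕ} : V k (k + 1) = replicate k ai ++ [bi] := by
  rw [V, if_neg (by omega), if_pos rfl]
lemma V_3 {k s : ℕ} (hs : k + 2 ≤ s) : V k s = J (s - k - 1) ++ [ai] := by
  rw [V, if_neg (by omega), if_neg (by omega)]

lemma length_J (t : ℕ) : (J t).length = 2 * t := by
  induction t with
  | zero => rfl
  | succ t ih => rw [J]; simp [ih]; omega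

lemma length_AB (t : ℕ) : (AB t).length = 2 * t := by
  induction t with
  | zero => rfl
  | succ t ih => rw [AB]; simp [ih]; omega

/-- The bundled facts needed for ping-pong. -/
lemma facts (k s : ℕ) (hk : 1 ≤ k) (hs1 : 1 ≤ s) :
    U k s <+: (β k s).toWord ∧ V k s <+: ((β k s)⁻¹).toWord ∧
      (U k s).length + (V k s).length ≤ (β k s).toWord.length + 1 := by
  rcases Nat.lt_trichotomy s (k + 1) with hs | hs | hs
  · -- s ≤ k
    have hsk : s ≤ k := by omega
    rw [toWord_case1 hs1 hsk, FreeGroup.toWord_inv, toWord_case1 hs1 hsk, invRev_WA,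
      U_1 hsk, V_1 hsk]
    obtain ⟨s', rfl⟩ : ∃ s', s = s' + 1 := ⟨s - 1, by omega⟩
    simp only [Nat.add_sub_cancel]
    refine ⟨⟨[bb, bb] ++ replicate s' aa, ?_⟩, ⟨[bi] ++ replicate (s' + 1) ai, ?_⟩, ?_⟩
    · rw [WA]
      simp only [Nat.add_sub_cancel]
      simp [List.append_assoc]
    · simp [List.append_assoc]
    · rw [WA]
      simp [List.length_append, List.length_replicate]
      omega
  · -- s = k + 1
    subst hs
    rw [toWord_case2 hk, FreeGroup.toWord_inv, toWord_case2 hk, invRev_WB, U_2, V_2]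
    obtain ⟨k', rfl⟩ : ∃ k', k = k' + 1 := ⟨k - 1, by omega⟩
    refine ⟨⟨replicate k' aa ++ replicate 3 bb ++ replicate (k' + 1) aa, ?_⟩,
      ⟨[bi, bi] ++ (replicate (k' + 1) ai ++ [bb]), ?_⟩, ?_⟩
    · rw [WB, List.replicate_succ]
      simp [List.append_assoc, List.replicate_succ]
    · simp [List.append_assoc]
    · rw [WB]
      simp [List.length_append, List.length_replicate]
      omega
  · -- k + 2 ≤ s
    have hs2 : k + 2 ≤ s := by omega
    have ht1 : 1 ≤ s - k - 1 := by omega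
    rw [toWord_case3 hk hs2, FreeGroup.toWord_inv, toWord_case3 hk hs2, invRev_WC,
      U_3 hs2, V_3 hs2]
    set t := s - k - 1 with hts
    obtain ⟨k', rfl⟩ : ∃ k', k = k' + 1 := ⟨k - 1, by omega⟩
    refine ⟨⟨replicate k' aa ++ replicate 3 bb ++ replicate (k' + 1) aa ++ AB t, ?_⟩,
      ⟨replicate k' ai ++ (replicate 3 bi ++ (replicate (k' + 1) ai ++ (bb :: AB t))), ?_⟩,
      ?_⟩
    · rw [WC, List.replicate_succ]
      simp [List.append_assoc, List.replicate_succ]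
    · rw [List.replicate_succ]
      simp [List.append_assoc, List.replicate_succ]
    · rw [WC]
      simp [List.length_append, List.length_replicate, length_J, length_AB]
      omega

/-! ### Disjointness of the ping-pong sets -/

def Pref (l : List L2) : Set F2 := {w | l <+: w.toWord}

lemma disj_pref {l₁ l₂ : List L2} (p : List L2) (c₁ c₂ : L2) (r₁ r₂ : List L2)
    (e₁ : l₁ = p ++ c₁ :: r₁) (e₂ : l₂ = p ++ c₂ :: r₂) (h : c₁ ≠ c₂ := by decide) :
    Disjoint (Pref l₁) (Pref l₂) := by
  rw [Set.disjoint_left]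
  rintro w h₁ h₂
  rcases List.prefix_or_prefix_of_prefix (h₁ : l₁ <+: w.toWord) (h₂ : l₂ <+: w.toWord)
    with hp | hp
  · rw [e₁, e₂, List.prefix_append_right_inj, List.cons_prefix_cons] at hp
    exact h hp.1
  · rw [e₁, e₂, List.prefix_append_right_inj, List.cons_prefix_cons] at hp
    exact h hp.1.symm

lemma J_add (m n : ℕ) : J (m + n) = J m ++ J n := by
  induction m with
  | zero => simp [J]
  | succ m ih =>
    have h : m + 1 + n = (m + n) + 1 := by omega
    rw [h, J, J, ih]
    simp

lemma UU (k : ℕ) {s s' : ℕ} (h1 : 1 ≤ s) (hlt : s < s') :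
    Disjoint (Pref (U k s)) (Pref (U k s')) := by
  rcases Nat.lt_trichotomy s' (k + 1) with hB | hB | hB
  · have hsk : s ≤ k := by omega
    have hsk' : s' ≤ k := by omega
    refine disj_pref (replicate s aa) bb aa [] (replicate (s' - s - 1) aa ++ [bb])
      (by rw [U_1 hsk]) ?_
    rw [U_1 hsk', (by omega : s' = s + ((s' - s - 1) + 1)), List.replicate_add,
      List.replicate_succ]
    simp
  · subst hB
    have hsk : s ≤ k := by omega
    refine disj_pref [] aa bi (replicate (s - 1) aa ++ [bb]) [aa] ?_ (by simp [U_2])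
    rw [U_1 hsk, (by omega : s = (s - 1) + 1), List.replicate_succ]
    simp
  · rcases Nat.lt_trichotomy s (k + 1) with hA | hA | hA
    · have hsk : s ≤ k := by omega
      have hs2' : k + 2 ≤ s' := by omega
      refine disj_pref [] aa bi (replicate (s - 1) aa ++ [bb])
        (ai :: (J (s' - k - 2) ++ [bi, aa])) ?_ ?_
      · rw [U_1 hsk, (by omega : s = (s - 1) + 1), List.replicate_succ]
        simp
      · rw [U_3 hs2', (by omega : s' - k - 1 = (s' - k - 2) + 1), J]
        simp
    · subst hA
      have hs2' : k + 2 ≤ s' := by omega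
      refine disj_pref [bi] aa ai [] (J (s' - k - 2) ++ [bi, aa])
        (by simp [U_2]) ?_
      rw [U_3 hs2', (by omega : s' - k - 1 = (s' - k - 2) + 1), J]
      simp
    · have hs2 : k + 2 ≤ s := by omega
      have hs2' : k + 2 ≤ s' := by omega
      refine disj_pref (J (s - k - 1) ++ [bi]) aa ai [] (J (s' - s - 1) ++ [bi, aa])
        ?_ ?_
      · rw [U_3 hs2]
        simp
      · rw [U_3 hs2', (by omega : s' - k - 1 = (s - k - 1) + ((s' - s - 1) + 1)), J_add, J]
        simp

lemma VV (k : ℕ) (hk : 1 ≤ k) {s s' : ℕ} (h1 : 1 ≤ s) (hlt : s < s') :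
    Disjoint (Pref (V k s)) (Pref (V k s')) := by
  rcases Nat.lt_trichotomy s' (k + 1) with hB | hB | hB
  · have hsk : s ≤ k := by omega
    have hsk' : s' ≤ k := by omega
    refine disj_pref (replicate (s - 1) ai) bi ai [bi] (replicate (s' - s - 1) ai ++ [bi, bi])
      (by simp [V_1 hsk]) ?_
    rw [V_1 hsk', (by omega : s' - 1 = (s - 1) + ((s' - s - 1) + 1)), List.replicate_add,
      List.replicate_succ]
    simp
  · subst hB
    have hsk : s ≤ k := by omega
    obtain ⟨d, hd⟩ : ∃ d, k = (s - 1) + (d + 1) := ⟨k - s, by omega⟩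
    refine disj_pref (replicate (s - 1) ai) bi ai [bi] (replicate d ai ++ [bi])
      (by simp [V_1 hsk]) ?_
    rw [V_2, hd, List.replicate_add, List.replicate_succ]
    simp
  · rcases Nat.lt_trichotomy s (k + 1) with hA | hA | hA
    · have hsk : s ≤ k := by omega
      have hs2' : k + 2 ≤ s' := by omega
      rcases Nat.lt_or_ge s 2 with hs1 | hs1
      · have hseq : s = 1 := by omega
        subst hseq
        refine disj_pref [bi] bi ai [] (J (s' - k - 2) ++ [ai])
          (by simp [V_1 hsk]) ?_
        rw [V_3 hs2', (by omega : s' - k - 1 = (s' - k - 2) + 1), J]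
        simp
      · refine disj_pref [] ai bi (replicate (s - 2) ai ++ [bi, bi])
          (ai :: (J (s' - k - 2) ++ [ai])) ?_ ?_
        · rw [V_1 hsk, (by omega : s - 1 = (s - 2) + 1), List.replicate_succ]
          simp
        · rw [V_3 hs2', (by omega : s' - k - 1 = (s' - k - 2) + 1), J]
          simp
    · subst hA
      have hs2' : k + 2 ≤ s' := by omega
      refine disj_pref [] ai bi (replicate (k - 1) ai ++ [bi])
        (ai :: (J (s' - k - 2) ++ [ai])) ?_ ?_
      · rw [V_2, (by omega : k = (k - 1) + 1), List.replicate_succ]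
        simp
      · rw [V_3 hs2', (by omega : s' - k - 1 = (s' - k - 2) + 1), J]
        simp
    · have hs2 : k + 2 ≤ s := by omega
      have hs2' : k + 2 ≤ s' := by omega
      refine disj_pref (J (s - k - 1)) ai bi [] (ai :: (J (s' - s - 1) ++ [ai]))
        (by rw [V_3 hs2]) ?_
      rw [V_3 hs2', (by omega : s' - k - 1 = (s - k - 1) + ((s' - s - 1) + 1)), J_add, J]
      simp

lemma UV (k : ℕ) (hk : 1 ≤ k) {s s' : ℕ} (h1 : 1 ≤ s) (h1' : 1 ≤ s') :
    Disjoint (Pref (U k s)) (Pref (V k s')) := by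
  rcases Nat.lt_trichotomy s (k + 1) with hA | hA | hA
  · have hsk : s ≤ k := by omega
    have e₁ : U k s = [] ++ aa :: (replicate (s - 1) aa ++ [bb]) := by
      rw [U_1 hsk, (by omega : s = (s - 1) + 1), List.replicate_succ]
      simp
    rcases Nat.lt_trichotomy s' (k + 1) with hB | hB | hB
    · have hsk' : s' ≤ k := by omega
      rcases Nat.lt_or_ge s' 2 with hs1' | hs1'
      · have hseq : s' = 1 := by omega
        subst hseq
        exact disj_pref [] aa bi _ [bi] e₁ (by simp [V_1 hsk'])
      · refine disj_pref [] aa ai _ (replicate (s' - 2) ai ++ [bi, bi]) e₁ ?_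
        rw [V_1 hsk', (by omega : s' - 1 = (s' - 2) + 1), List.replicate_succ]
        simp
    · subst hB
      refine disj_pref [] aa ai _ (replicate (k - 1) ai ++ [bi]) e₁ ?_
      rw [V_2, (by omega : k = (k - 1) + 1), List.replicate_succ]
      simp
    · have hs2' : k + 2 ≤ s' := by omega
      refine disj_pref [] aa bi _ (ai :: (J (s' - k - 2) ++ [ai])) e₁ ?_
      rw [V_3 hs2', (by omega : s' - k - 1 = (s' - k - 2) + 1), J]
      simp
  · subst hA
    rcases Nat.lt_trichotomy s' (k + 1) with hB | hB | hB
    · have hsk' : s' ≤ k := by omega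
      rcases Nat.lt_or_ge s' 2 with hs1' | hs1'
      · have hseq : s' = 1 := by omega
        subst hseq
        exact disj_pref [bi] aa bi [] [] (by simp [U_2]) (by simp [V_1 hsk'])
      · refine disj_pref [] bi ai [aa] (replicate (s' - 2) ai ++ [bi, bi])
          (by simp [U_2]) ?_
        rw [V_1 hsk', (by omega : s' - 1 = (s' - 2) + 1), List.replicate_succ]
        simp
    · subst hB
      refine disj_pref [] bi ai [aa] (replicate (k - 1) ai ++ [bi])
        (by simp [U_2]) ?_
      rw [V_2, (by omega : k = (k - 1) + 1), List.replicate_succ]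
      simp
    · have hs2' : k + 2 ≤ s' := by omega
      refine disj_pref [bi] aa ai [] (J (s' - k - 2) ++ [ai])
        (by simp [U_2]) ?_
      rw [V_3 hs2', (by omega : s' - k - 1 = (s' - k - 2) + 1), J]
      simp
  · have hs2 : k + 2 ≤ s := by omega
    have e₁ : U k s = [] ++ bi :: (ai :: (J (s - k - 2) ++ [bi, aa])) := by
      rw [U_3 hs2, (by omega : s - k - 1 = (s - k - 2) + 1), J]
      simp
    rcases Nat.lt_trichotomy s' (k + 1) with hB | hB | hB
    · have hsk' : s' ≤ k := by omega
      rcases Nat.lt_or_ge s' 2 with hs1' | hs1'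
      · have hseq : s' = 1 := by omega
        subst hseq
        refine disj_pref [bi] ai bi (J (s - k - 2) ++ [bi, aa]) [] ?_
          (by simp [V_1 hsk'])
        rw [U_3 hs2, (by omega : s - k - 1 = (s - k - 2) + 1), J]
        simp
      · refine disj_pref [] bi ai _ (replicate (s' - 2) ai ++ [bi, bi]) e₁ ?_
        rw [V_1 hsk', (by omega : s' - 1 = (s' - 2) + 1), List.replicate_succ]
        simp
    · subst hB
      refine disj_pref [] bi ai _ (replicate (k - 1) ai ++ [bi]) e₁ ?_
      rw [V_2, (by omega : k = (k - 1) + 1), List.replicate_succ]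
      simp
    · have hs2' : k + 2 ≤ s' := by omega
      rcases Nat.lt_trichotomy s s' with hC | hC | hC
      · refine disj_pref (J (s - k - 1) ++ [bi]) aa ai [] (J (s' - s - 1) ++ [ai])
          (by rw [U_3 hs2]; simp) ?_
        rw [V_3 hs2', (by omega : s' - k - 1 = (s - k - 1) + ((s' - s - 1) + 1)), J_add, J]
        simp
      · subst hC
        exact disj_pref (J (s - k - 1)) bi ai [aa] [] (by rw [U_3 hs2]) (by rw [V_3 hs2'])
      · refine disj_pref (J (s' - k - 1)) bi ai (ai :: (J (s - s' - 1) ++ [bi, aa])) []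
          ?_ (by rw [V_3 hs2'])
        rw [U_3 hs2, (by omega : s - k - 1 = (s' - k - 1) + ((s - s' - 1) + 1)), J_add, J]
        simp

open Pointwise

theorem stmt_16 (k n : ℕ) (hk : 2 ≤ k) (heven : Even k) (hn : k ≤ n) :
    Function.Injective (FreeGroup.lift fun i : Fin n => β k ((i : ℕ) + 1)) := by
  have hk1 : 1 ≤ k := by omega
  haveI : Nontrivial (Fin n) := ⟨⟨⟨0, by omega⟩, ⟨1, by omega⟩, by simp [Fin.ext_iff]⟩⟩
  apply FreeGroup.injective_lift_of_ping_pong _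
    (fun i : Fin n => Pref (U k ((i : ℕ) + 1)))
    (fun i : Fin n => Pref (V k ((i : ℕ) + 1)))
  · intro i
    exact ⟨β k ((i : ℕ) + 1), (facts k ((i : ℕ) + 1) hk1 (by omega)).1⟩
  · intro i j hij
    have hne : (i : ℕ) + 1 ≠ (j : ℕ) + 1 := by
      intro h
      exact hij (Fin.ext (by omega))
    rcases Nat.lt_or_ge ((i : ℕ) + 1) ((j : ℕ) + 1) with h | h
    · exact UU k (by omega) h
    · exact (UU k (by omega) (by omega)).symm
  · intro i j hij
    have hne : (i : ℕ) + 1 ≠ (j : ℕ) + 1 := by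
      intro h
      exact hij (Fin.ext (by omega))
    rcases Nat.lt_or_ge ((i : ℕ) + 1) ((j : ℕ) + 1) with h | h
    · exact VV k hk1 (by omega) h
    · exact (VV k hk1 (by omega) (by omega)).symm
  · intro i j
    exact UV k hk1 (by omega) (by omega)
  · intro i z hz
    obtain ⟨w, hw, rfl⟩ := hz
    have hfacts := facts k ((i : ℕ) + 1) hk1 (by omega)
    show U k ((i : ℕ) + 1) <+: (β k ((i : ℕ) + 1) * w).toWord
    exact prefix_mul _ w _ _ hfacts.1 hfacts.2.1 hfacts.2.2 (by simpa [Pref] using hw)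
  · intro i z hz
    obtain ⟨w, hw, rfl⟩ := hz
    have hfacts := facts k ((i : ℕ) + 1) hk1 (by omega)
    show V k ((i : ℕ) + 1) <+: ((β k ((i : ℕ) + 1))⁻¹ * w).toWord
    refine prefix_mul _ w (V k ((i : ℕ) + 1)) (U k ((i : ℕ) + 1)) hfacts.2.1 ?_ ?_
      (by simpa [Pref] using hw)
    · rw [inv_inv]
      exact hfacts.1
    · rw [FreeGroup.toWord_inv, FreeGroup.invRev_length]
      omega

end Stmt16
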